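/- Let p0, p1, p2 ∈ R_{2,1} have no common zeros on P^1 × P^1, and write p_i = A_i(x,y) z + B_i(x,y) w with A_i, B_i ∈ R_{2,0} for i = 0, 1, 2. Then C := (A1 B2 − A2 B1, A2 B0 − A0 B2, A0 B1 − A1 B0) is a nonzero element of Syz(p)_{6,1} that does not lie in the Koszul submodule. -/

import Mathlib

open MvPolynomial

noncomputable section

/-- The bigraded polynomial ring `R = k[x,y,z,w]`; variables `0,1,2,3` are `x,y,z,w`. -/
abbrev Rk (k : Type*) [Field k] := MvPolynomial (Fin 4) k

/-- The bigrading: `x, y` have degree `(1,0)`; `z, w` have degree `(0,1)`. -/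
def bidegWt : Fin 4 → ℤ × ℤ := ![(1, 0), (1, 0), (0, 1), (0, 1)]

/-- `p` is bihomogeneous of bidegree `(m, n)` (with the convention that only the zero
polynomial is bihomogeneous of a bidegree with a negative coordinate). -/
def Bihom {k : Type*} [Field k] (p : Rk k) (m n : ℤ) : Prop :=
  p.IsWeightedHomogeneous bidegWt (m, n)

/-- `p0, p1, p2` have no common zeros on `ℙ¹ × ℙ¹`. -/
def NoCommonZeros {k : Type*} [Field k] (p0 p1 p2 : Rk k) : Prop :=
  ∀ a b c d : k, (a, b) ≠ (0, 0) → (c, d) ≠ (0, 0) →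
    eval ![a, b, c, d] p0 ≠ 0 ∨ eval ![a, b, c, d] p1 ≠ 0 ∨ eval ![a, b, c, d] p2 ≠ 0

/-- The map `(A0, A1, A2) ↦ A0 p0 + A1 p1 + A2 p2`, as a `k`-linear map on `R³`. -/
def syzMapk {k : Type*} [Field k] (p : Fin 3 → Rk k) : (Fin 3 → Rk k) →ₗ[k] Rk k :=
  ∑ i : Fin 3, (LinearMap.mulRight k (p i)).comp (LinearMap.proj i)

/-- The bigraded piece `Syz(p)_{m,n}`: triples `(A0, A1, A2)` of bihomogeneous polynomials of
bidegree `(m-2, n-1)` with `A0 p0 + A1 p1 + A2 p2 = 0`, as a `k`-subspace of `R³`. -/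
def SyzPiece {k : Type*} [Field k] (p : Fin 3 → Rk k) (m n : ℤ) :
    Submodule k (Fin 3 → Rk k) :=
  (Submodule.pi Set.univ fun _ => weightedHomogeneousSubmodule k bidegWt (m - 2, n - 1)) ⊓
    LinearMap.ker (syzMapk p)

/-- The syzygy module `Syz(p)`, as an `R`-submodule of `R³`. -/
def Syz {k : Type*} [Field k] (p : Fin 3 → Rk k) : Submodule (Rk k) (Fin 3 → Rk k) :=
  LinearMap.ker (∑ i : Fin 3, (LinearMap.mulRight (Rk k) (p i)).comp (LinearMap.proj i))

/-- The Koszul submodule of `R³`: the `R`-submodule generated by the three Koszul syzygies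
`(p1, −p0, 0)`, `(p2, 0, −p0)`, `(0, p2, −p1)`. -/
def KoszulSub {k : Type*} [Field k] (p0 p1 p2 : Rk k) : Submodule (Rk k) (Fin 3 → Rk k) :=
  Submodule.span (Rk k) {![p1, -p0, 0], ![p2, 0, -p0], ![0, p2, -p1]}

/-- `p0, p1, p2 ∈ R_{2,1}` are generic: only finitely many points `[a0 : a1 : a2]` of `ℙ²(k)`
are such that `a0 p0 + a1 p1 + a2 p2` factors as `q · l` with `q ∈ R_{2,0}`, `l ∈ R_{0,1}`. -/
def BidegGeneric {k : Type*} [Field k] (p0 p1 p2 : Rk k) : Prop :=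
  {P : Projectivization k (Fin 3 → k) |
    ∃ q l : Rk k, Bihom q 2 0 ∧ Bihom l 0 1 ∧
      P.rep 0 • p0 + P.rep 1 • p1 + P.rep 2 • p2 = q * l}.Finite

section Aux

variable {k : Type*} [Field k]

lemma weight_bideg (d : Fin 4 →₀ ℕ) :
    Finsupp.weight bidegWt d = ((d 0 + d 1 : ℤ), (d 2 + d 3 : ℤ)) := by
  rw [Finsupp.weight_apply, Finsupp.sum_fintype]
  · simp [Fin.sum_univ_four, bidegWt, Prod.ext_iff]
  · intro i; simp

lemma bihom_supp {q : Rk k} {m : ℤ} (h : Bihom q m 0) {d : Fin 4 →₀ ℕ}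
    (hd : d ∈ q.support) : d 2 = 0 ∧ d 3 = 0 := by
  have := h (mem_support_iff.mp hd)
  rw [weight_bideg] at this
  have h2 : (d 2 : ℤ) + d 3 = 0 := by
    have := congrArg Prod.snd this; simpa using this
  constructor <;> omega

lemma eval_of_supp {q : Rk k} (hq : ∀ d ∈ q.support, d 2 = 0 ∧ d 3 = 0)
    {f g : Fin 4 → k} (e0 : f 0 = g 0) (e1 : f 1 = g 1) : eval f q = eval g q := by
  rw [eval_eq', eval_eq']
  refine Finset.sum_congr rfl fun d hd => ?_
  obtain ⟨h2, h3⟩ := hq d hd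
  rw [Fin.prod_univ_four, Fin.prod_univ_four, e0, e1, h2, h3]
  simp

lemma aeval_fix {q : Rk k} (hq : ∀ d ∈ q.support, d 2 = 0 ∧ d 3 = 0) :
    aeval ![X 0, X 1, (0 : Rk k), 0] q = q := by
  conv_lhs => rw [q.as_sum]
  rw [map_sum]
  conv_rhs => rw [q.as_sum]
  refine Finset.sum_congr rfl fun d hd => ?_
  obtain ⟨h2, h3⟩ := hq d hd
  rw [aeval_monomial, monomial_eq, Finsupp.prod_pow, Finsupp.prod_pow,
    Fin.prod_univ_four, Fin.prod_univ_four, h2, h3]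
  simp [algebraMap_eq]

lemma exists_pt [Infinite k] {q : Rk k} (hq2 : Bihom q 2 0) (hne : q ≠ 0) :
    ∃ a b : k, (a, b) ≠ ((0 : k), (0 : k)) ∧ eval ![a, b, 0, 0] q ≠ 0 := by
  have hnz : ¬ ∀ f : Fin 4 → k, eval f q = 0 := by
    intro h
    exact hne (MvPolynomial.funext (q := 0) (by simp [h]))
  push_neg at hnz
  obtain ⟨f, hf⟩ := hnz
  have heq : eval ![f 0, f 1, (0 : k), 0] q = eval f q :=
    eval_of_supp (fun d hd => bihom_supp hq2 hd) (by simp) (by simp)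
  refine ⟨f 0, f 1, ?_, heq ▸ hf⟩
  intro hab
  have h0 : f 0 = 0 := congrArg Prod.fst hab
  have h1 : f 1 = 0 := congrArg Prod.snd hab
  have hz : eval ![f 0, f 1, (0 : k), 0] q = 0 := by
    have hfun : (![f 0, f 1, (0 : k), 0] : Fin 4 → k) = 0 := by
      funext i; fin_cases i <;> simp [h0, h1]
    rw [hfun, show (0 : Fin 4 → k) = fun _ => 0 from rfl, eval_zero']
    by_contra hc
    have := hq2 (show coeff 0 q ≠ 0 from hc)
    rw [weight_bideg] at this
    simp [Prod.ext_iff] at this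
  exact hf (heq ▸ hz)

end Aux

/-- **Proposition 6.3.** Writing `pᵢ = Aᵢ(x,y) z + Bᵢ(x,y) w`, the triple of
`2×2` minors `C = (A1 B2 − A2 B1, A2 B0 − A0 B2, A0 B1 − A1 B0)` is a nonzero element of
`Syz(p)_{6,1}` not lying in the Koszul submodule. -/
theorem statement10 {k : Type*} [Field k] [IsAlgClosed k] (p0 p1 p2 : Rk k)
    (h0 : Bihom p0 2 1) (h1 : Bihom p1 2 1) (h2 : Bihom p2 2 1)
    (hncz : NoCommonZeros p0 p1 p2)
    (A B : Fin 3 → Rk k) (hA : ∀ i, Bihom (A i) 2 0) (hB : ∀ i, Bihom (B i) 2 0)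
    (hp0 : p0 = A 0 * X 2 + B 0 * X 3)
    (hp1 : p1 = A 1 * X 2 + B 1 * X 3)
    (hp2 : p2 = A 2 * X 2 + B 2 * X 3) :
    (![A 1 * B 2 - A 2 * B 1, A 2 * B 0 - A 0 * B 2, A 0 * B 1 - A 1 * B 0] : Fin 3 → Rk k)
        ≠ 0 ∧
    (![A 1 * B 2 - A 2 * B 1, A 2 * B 0 - A 0 * B 2, A 0 * B 1 - A 1 * B 0] : Fin 3 → Rk k)
        ∈ SyzPiece ![p0, p1, p2] 6 1 ∧
    (![A 1 * B 2 - A 2 * B 1, A 2 * B 0 - A 0 * B 2, A 0 * B 1 - A 1 * B 0] : Fin 3 → Rk k)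
        ∉ KoszulSub p0 p1 p2 := by
  set C : Fin 3 → Rk k :=
    ![A 1 * B 2 - A 2 * B 1, A 2 * B 0 - A 0 * B 2, A 0 * B 1 - A 1 * B 0] with hCdef
  -- Part 1: C ≠ 0
  have part1 : C ≠ 0 := by
    intro hC
    have hc0 : A 1 * B 2 = A 2 * B 1 := by
      have := congrFun hC 0; simp only [hCdef, Matrix.cons_val_zero, Pi.zero_apply,
        sub_eq_zero] at this; exact this
    have hc1 : A 2 * B 0 = A 0 * B 2 := by
      have := congrFun hC 1; simp only [hCdef, Matrix.cons_val_one, Matrix.head_cons, Matrix.cons_val_zero,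
        Pi.zero_apply, sub_eq_zero] at this; exact this
    have hc2 : A 0 * B 1 = A 1 * B 0 := by
      have := congrFun hC 2; simp only [hCdef, Matrix.cons_val_two, Matrix.tail_cons,
        Matrix.head_cons, Pi.zero_apply, sub_eq_zero] at this; exact this
    have hm : ∀ i j : Fin 3, A i * B j = A j * B i := by
      intro i j
      fin_cases i <;> fin_cases j <;>
        first
          | rfl
          | exact hc0 | exact hc0.symm
          | exact hc1 | exact hc1.symm
          | exact hc2 | exact hc2.symm
    by_cases hall : ∀ i : Fin 3, A i = 0 ∧ B i = 0
    · rcases hncz 1 0 1 0 (by simp) (by simp) with h | h | h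
      · rw [hp0, (hall 0).1, (hall 0).2] at h; simp at h
      · rw [hp1, (hall 1).1, (hall 1).2] at h; simp at h
      · rw [hp2, (hall 2).1, (hall 2).2] at h; simp at h
    · push_neg at hall
      obtain ⟨j, hj⟩ := hall
      have hq : ∃ q : Rk k, Bihom q 2 0 ∧ q ≠ 0 ∧ (q = A j ∨ q = B j) := by
        by_cases hAj : A j = 0
        · exact ⟨B j, hB j, hj hAj, Or.inr rfl⟩
        · exact ⟨A j, hA j, hAj, Or.inl rfl⟩
      obtain ⟨q, hq20, hqne, hqor⟩ := hq
      obtain ⟨a, b, hab, hqab⟩ := exists_pt hq20 hqne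
      set α : Fin 3 → k := fun i => eval ![a, b, 0, 0] (A i) with hα
      set β : Fin 3 → k := fun i => eval ![a, b, 0, 0] (B i) with hβ
      have hcd : ((β j, -α j) : k × k) ≠ (0, 0) := by
        intro hcd0
        have hβ0 : β j = 0 := congrArg Prod.fst hcd0
        have hα0 : α j = 0 := by
          have := congrArg Prod.snd hcd0; simpa [neg_eq_zero] using this
        rcases hqor with rfl | rfl
        · exact hqab hα0
        · exact hqab hβ0
      have hpev : ∀ (P : Rk k) (i : Fin 3), P = A i * X 2 + B i * X 3 →
          eval ![a, b, β j, -α j] P = 0 := by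
        intro P i hP
        have hAi : eval ![a, b, β j, -α j] (A i) = α i :=
          eval_of_supp (fun d hd => bihom_supp (hA i) hd) (by simp) (by simp)
        have hBi : eval ![a, b, β j, -α j] (B i) = β i :=
          eval_of_supp (fun d hd => bihom_supp (hB i) hd) (by simp) (by simp)
        have hmab : α i * β j = α j * β i := by
          have := congrArg (eval ![a, b, (0 : k), 0]) (hm i j)
          simpa [hα, hβ] using this
        rw [hP]
        simp only [map_add, map_mul, eval_X, hAi, hBi]
        have e2 : (![a, b, β j, -α j] : Fin 4 → k) 2 = β j := rfl
        have e3 : (![a, b, β j, -α j] : Fin 4 → k) 3 = -α j := rfl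
        rw [e2, e3]
        linear_combination hmab
      rcases hncz a b (β j) (-α j) hab hcd with h | h | h
      · exact h (hpev p0 0 hp0)
      · exact h (hpev p1 1 hp1)
      · exact h (hpev p2 2 hp2)
  -- Part 2: degrees
  have hmul : ∀ i j : Fin 3,
      (A i * B j).IsWeightedHomogeneous bidegWt (((6 : ℤ) - 2, (1 : ℤ) - 1) : ℤ × ℤ) := by
    intro i j
    have he : (((6 : ℤ) - 2, (1 : ℤ) - 1) : ℤ × ℤ) = (((2, 0) : ℤ × ℤ) + ((2, 0) : ℤ × ℤ)) := by
      norm_num [Prod.ext_iff]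
    rw [he]
    exact (hA i).mul (hB j)
  have hdeg : ∀ i : Fin 3,
      C i ∈ weightedHomogeneousSubmodule k bidegWt ((6 : ℤ) - 2, (1 : ℤ) - 1) := by
    intro i
    fin_cases i <;>
      · show _ - _ ∈ _
        exact Submodule.sub_mem _ (hmul _ _) (hmul _ _)
  have part2 : C ∈ SyzPiece ![p0, p1, p2] 6 1 := by
    rw [SyzPiece, Submodule.mem_inf]
    constructor
    · rw [Submodule.mem_pi]
      intro i _
      exact hdeg i
    · rw [LinearMap.mem_ker, syzMapk]
      simp only [LinearMap.sum_apply, LinearMap.comp_apply, LinearMap.proj_apply,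
        LinearMap.mulRight_apply, Fin.sum_univ_three]
      show C 0 * (![p0, p1, p2] 0) + C 1 * (![p0, p1, p2] 1) + C 2 * (![p0, p1, p2] 2) = 0
      have e0 : C 0 = A 1 * B 2 - A 2 * B 1 := rfl
      have e1 : C 1 = A 2 * B 0 - A 0 * B 2 := rfl
      have e2 : C 2 = A 0 * B 1 - A 1 * B 0 := rfl
      rw [e0, e1, e2, show (![p0, p1, p2] : Fin 3 → Rk k) 0 = p0 from rfl,
        show (![p0, p1, p2] : Fin 3 → Rk k) 1 = p1 from rfl,
        show (![p0, p1, p2] : Fin 3 → Rk k) 2 = p2 from rfl, hp0, hp1, hp2]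
      ring
  -- Part 3
  have part3 : C ∉ KoszulSub p0 p1 p2 := by
    intro hmem
    set f4 : Fin 4 → Rk k := ![X 0, X 1, 0, 0] with hf4
    have hap : ∀ (P : Rk k) (i : Fin 3), P = A i * X 2 + B i * X 3 → aeval f4 P = 0 := by
      intro P i hP
      rw [hP]
      simp only [map_add, map_mul, aeval_X, hf4]
      have e2 : (![X 0, X 1, (0 : Rk k), 0] : Fin 4 → Rk k) 2 = 0 := rfl
      have e3 : (![X 0, X 1, (0 : Rk k), 0] : Fin 4 → Rk k) 3 = 0 := rfl
      rw [e2, e3, mul_zero, mul_zero, add_zero]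
    have ha0 : aeval f4 p0 = 0 := hap p0 0 hp0
    have ha1 : aeval f4 p1 = 0 := hap p1 1 hp1
    have ha2 : aeval f4 p2 = 0 := hap p2 2 hp2
    have key : ∀ i, aeval f4 (C i) = 0 := by
      intro i
      refine Submodule.span_induction (R := Rk k) (M := Fin 3 → Rk k) (x := C) (p := fun v _ => aeval f4 (v i) = 0) ?_ ?_ ?_ ?_ hmem
      · intro x hx
        simp only [Set.mem_insert_iff, Set.mem_singleton_iff] at hx
        rcases hx with rfl | rfl | rfl <;> fin_cases i <;>
          first
            | exact ha0 | exact ha1 | exact ha2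
            | exact map_zero _
            | (show (aeval f4) (-p0) = 0; rw [map_neg, ha0, neg_zero])
            | (show (aeval f4) (-p1) = 0; rw [map_neg, ha1, neg_zero])
      · simp
      · intro x y _ _ hx hy
        simp only [Pi.add_apply, map_add, hx, hy, add_zero]
      · intro r x _ hx
        simp only [Pi.smul_apply, smul_eq_mul, map_mul, hx, mul_zero]
    apply part1
    funext i
    have hfix : aeval f4 (C i) = C i :=
      aeval_fix (fun d hd => bihom_supp (m := (6 : ℤ) - 2)
        (by simpa [Bihom] using (mem_weightedHomogeneousSubmodule k bidegWt _ _).mp (hdeg i)) hd)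
    rw [Pi.zero_apply, ← hfix, key i]
  exact ⟨part1, part2, part3⟩

end
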